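/- Let p, q be integers with 1 ≤ p < q. The rewriting relation →_BS is confluent: if w →*_BS u and w →*_BS v then there exists z with u →*_BS z and v →*_BS z. Moreover, two words u, v over {a, a⁻¹, t, t⁻¹} represent the same element of BS(p,q) if and only if they have a common descendant, i.e., there exists a word z with u →*_BS z and v →*_BS z. -/

import Mathlib

inductive Letter : Type
  | a | A | t | T
  deriving DecidableEq

def bsRel (p q : ℤ) : Set (FreeGroup Bool) :=
  {FreeGroup.of true * (FreeGroup.of false) ^ p * (FreeGroup.of true)⁻¹ * (FreeGroup.of false) ^ (-q)}

abbrev BS (p q : ℤ) := PresentedGroup (bsRel p q)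

def evalLetter (p q : ℤ) : Letter → BS p q
  | .a => PresentedGroup.of false
  | .A => (PresentedGroup.of false)⁻¹
  | .t => PresentedGroup.of true
  | .T => (PresentedGroup.of true)⁻¹

def eval (p q : ℤ) (w : List Letter) : BS p q := (w.map (evalLetter p q)).prod

def aPow (α : ℤ) : List Letter :=
  if 0 ≤ α then List.replicate α.toNat Letter.a else List.replicate (-α).toNat Letter.A

def Geodesic (p q : ℤ) (w : List Letter) : Prop :=
  ∀ v : List Letter, eval p q v = eval p q w → w.length ≤ v.length

/-- Ranking of letters in the order `t < T < a < A`. -/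
def letterIdx : Letter → ℕ
  | .t => 0
  | .T => 1
  | .a => 2
  | .A => 3

/-- Length-lexicographical strict order on words, with letters ordered `t < T < a < A`. -/
def llLt (u v : List Letter) : Prop :=
  u.length < v.length ∨
    (u.length = v.length ∧ List.Lex (· < ·) (u.map letterIdx) (v.map letterIdx))

/-- `IsLlnf p q v w` : `v` is the length-lexicographical normal form of `w`,
i.e. `v` represents the same element as `w` and no word representing this element
precedes `v` in the length-lexicographical order. -/
def IsLlnf (p q : ℤ) (v w : List Letter) : Prop :=
  eval p q v = eval p q w ∧ ∀ u : List Letter, eval p q u = eval p q w → ¬ llLt u v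

/-- A word contains no factors `a a⁻¹` or `a⁻¹ a`. -/
def Reduced (w : List Letter) : Prop :=
  (∀ u v : List Letter, w ≠ u ++ [Letter.a, Letter.A] ++ v) ∧
  (∀ u v : List Letter, w ≠ u ++ [Letter.A, Letter.a] ++ v)

/-- A word is Britton-reduced: it has no factors `a a⁻¹`, `a⁻¹ a`,
`t a^{pμ} t⁻¹` or `t⁻¹ a^{qμ} t` (with `μ ∈ ℤ`). -/
def BrittonReduced (p q : ℤ) (w : List Letter) : Prop :=
  Reduced w ∧
  (∀ u v : List Letter, ∀ μ : ℤ, w ≠ u ++ [Letter.t] ++ aPow (p * μ) ++ [Letter.T] ++ v) ∧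
  (∀ u v : List Letter, ∀ μ : ℤ, w ≠ u ++ [Letter.T] ++ aPow (q * μ) ++ [Letter.t] ++ v)

/-- The t-sequence of a word: its subsequence of letters from `{t, t⁻¹}`. -/
def tSeq (w : List Letter) : List Letter :=
  w.filter (fun c => c == Letter.t || c == Letter.T)

/-- The geodesic length of a group element: the least length of a word representing it. -/
noncomputable def geodesicLength (p q : ℤ) (g : BS p q) : ℕ :=
  sInf {n : ℕ | ∃ w : List Letter, eval p q w = g ∧ w.length = n}

/-- A valley: every prefix has height `≤ 0` and the total height is `0`,
where the height of a prefix is (number of `t`'s) − (number of `t⁻¹`'s). -/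
def IsValley (w : List Letter) : Prop :=
  (∀ u v : List Letter, w = u ++ v → u.count Letter.t ≤ u.count Letter.T) ∧
  w.count Letter.t = w.count Letter.T


/-- The rules of the string rewriting system `BS`. -/
def bsRules (p q : ℤ) : List (List Letter × List Letter) :=
  [([Letter.a, Letter.A], []),
   ([Letter.A, Letter.a], []),
   ([Letter.t, Letter.T], []),
   ([Letter.T, Letter.t], []),
   (List.replicate q.toNat Letter.a ++ [Letter.t], Letter.t :: List.replicate p.toNat Letter.a),
   ([Letter.A, Letter.t],
     List.replicate (q - 1).toNat Letter.a ++ [Letter.t] ++ List.replicate p.toNat Letter.A),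
   (List.replicate p.toNat Letter.a ++ [Letter.T], Letter.T :: List.replicate q.toNat Letter.a),
   ([Letter.A, Letter.T],
     List.replicate (p - 1).toNat Letter.a ++ [Letter.T] ++ List.replicate q.toNat Letter.A)]

/-- One rewriting step of the system `BS`: replace a factor that is a left-hand
side of a rule by the corresponding right-hand side. -/
def Step (p q : ℤ) (u v : List Letter) : Prop :=
  ∃ (x y l r : List Letter), (l, r) ∈ bsRules p q ∧ u = x ++ l ++ y ∧ v = x ++ r ++ y


section BSAux

open Letter List Relation

variable {p q : ℤ}

/-- Abbreviation for the reflexive-transitive closure of `Step`. -/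
abbrev Rtg (p q : ℤ) := Relation.ReflTransGen (Step p q)

theorem step_of_rule {l r : List Letter} (h : (l, r) ∈ bsRules p q) (x y : List Letter) :
    Step p q (x ++ l ++ y) (x ++ r ++ y) :=
  ⟨x, y, l, r, h, rfl, rfl⟩

theorem Step.append_left {u v : List Letter} (z : List Letter) (h : Step p q u v) :
    Step p q (z ++ u) (z ++ v) := by
  obtain ⟨x, y, l, r, hm, hu, hv⟩ := h
  exact ⟨z ++ x, y, l, r, hm, by simp [hu], by simp [hv]⟩

theorem Step.append_right {u v : List Letter} (z : List Letter) (h : Step p q u v) :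
    Step p q (u ++ z) (v ++ z) := by
  obtain ⟨x, y, l, r, hm, hu, hv⟩ := h
  exact ⟨x, y ++ z, l, r, hm, by simp [hu], by simp [hv]⟩

theorem Rtg.append_left (z : List Letter) {u v : List Letter} (h : Rtg p q u v) :
    Rtg p q (z ++ u) (z ++ v) :=
  Relation.ReflTransGen.lift (z ++ ·) (fun _ _ h => h.append_left z) _ _ h

theorem Rtg.append_right (z : List Letter) {u v : List Letter} (h : Rtg p q u v) :
    Rtg p q (u ++ z) (v ++ z) :=
  Relation.ReflTransGen.lift (· ++ z) (fun _ _ h => h.append_right z) _ _ h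

theorem Rtg.append {u v u' v' : List Letter} (h : Rtg p q u u') (h' : Rtg p q v v') :
    Rtg p q (u ++ v) (u' ++ v') :=
  (h.append_right v).trans (h'.append_left u')

theorem aPow_zero : aPow 0 = [] := by simp [aPow]

theorem aPow_one : aPow 1 = [a] := by simp [aPow]

theorem aPow_neg_one : aPow (-1) = [A] := by norm_num [aPow]

theorem aPow_of_nonneg {n : ℤ} (h : 0 ≤ n) : aPow n = replicate n.toNat a := by
  simp [aPow, h]

theorem aPow_of_nonpos {n : ℤ} (h : n ≤ 0) : aPow n = replicate (-n).toNat A := by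
  rcases eq_or_lt_of_le h with h' | h'
  · simp [aPow, h']
  · simp [aPow, not_le.mpr h']

theorem aPow_add_of_nonneg {m n : ℤ} (hm : 0 ≤ m) (hn : 0 ≤ n) :
    aPow (m + n) = aPow m ++ aPow n := by
  rw [aPow_of_nonneg hm, aPow_of_nonneg hn, aPow_of_nonneg (by omega), ← List.replicate_add]
  congr 1
  omega

theorem aPow_add_of_nonpos {m n : ℤ} (hm : m ≤ 0) (hn : n ≤ 0) :
    aPow (m + n) = aPow m ++ aPow n := by
  rw [aPow_of_nonpos hm, aPow_of_nonpos hn, aPow_of_nonpos (by omega), ← List.replicate_add]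
  congr 1
  omega

theorem rtg_cancel_aA : ∀ i j : ℕ, ∀ z : ℤ, z = (i : ℤ) - j →
    Rtg p q (replicate i a ++ replicate j A) (aPow z)
  | 0, j, z, hz => by
    rw [aPow_of_nonpos (by omega), show (-z).toNat = j by omega]
    exact Relation.ReflTransGen.refl
  | i + 1, 0, z, hz => by
    rw [aPow_of_nonneg (by omega), show z.toNat = i + 1 by omega,
      show replicate (i+1) a ++ replicate 0 A = replicate (i+1) a by simp]
  | i + 1, j + 1, z, hz => by
    have hstep : Step p q (replicate i a ++ [a, A] ++ replicate j A)
        (replicate i a ++ [] ++ replicate j A) :=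
      step_of_rule (by simp [bsRules]) _ _
    have he : replicate (i+1) a ++ replicate (j+1) A
        = replicate i a ++ [a, A] ++ replicate j A := by
      rw [List.replicate_succ' (n := i), List.replicate_succ (n := j)]
      simp
    rw [he]
    exact Relation.ReflTransGen.head hstep
      (by simpa using rtg_cancel_aA i j z (by omega))

theorem rtg_cancel_Aa : ∀ i j : ℕ, ∀ z : ℤ, z = (j : ℤ) - i →
    Rtg p q (replicate i A ++ replicate j a) (aPow z)
  | 0, j, z, hz => by
    rw [aPow_of_nonneg (by omega), show z.toNat = j by omega]
    exact Relation.ReflTransGen.refl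
  | i + 1, 0, z, hz => by
    rw [aPow_of_nonpos (by omega), show (-z).toNat = i + 1 by omega,
      show replicate (i+1) A ++ replicate 0 a = replicate (i+1) A by simp]
  | i + 1, j + 1, z, hz => by
    have hstep : Step p q (replicate i A ++ [A, a] ++ replicate j a)
        (replicate i A ++ [] ++ replicate j a) :=
      step_of_rule (by simp [bsRules]) _ _
    have he : replicate (i+1) A ++ replicate (j+1) a
        = replicate i A ++ [A, a] ++ replicate j a := by
      rw [List.replicate_succ' (n := i), List.replicate_succ (n := j)]
      simp
    rw [he]
    exact Relation.ReflTransGen.head hstep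
      (by simpa using rtg_cancel_Aa i j z (by omega))

theorem rtg_aPow_merge (m n : ℤ) : Rtg p q (aPow m ++ aPow n) (aPow (m + n)) := by
  rcases le_or_gt 0 m with hm | hm
  · rcases le_or_gt 0 n with hn | hn
    · rw [aPow_add_of_nonneg hm hn]
    · rw [aPow_of_nonneg hm, aPow_of_nonpos hn.le]
      exact rtg_cancel_aA m.toNat (-n).toNat (m + n) (by omega)
  · rcases le_or_gt 0 n with hn | hn
    · rw [aPow_of_nonpos hm.le, aPow_of_nonneg hn]
      exact rtg_cancel_Aa (-m).toNat n.toNat (m + n) (by omega)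
    · rw [aPow_add_of_nonpos hm.le hn.le]

/-- Bound: number of `a`'s allowed before the symbol. -/
def bnd (p q : ℤ) : Bool → ℤ
  | true => q
  | false => p

/-- Push: number of `a`'s pushed to the other side. -/
def psh (p q : ℤ) : Bool → ℤ
  | true => p
  | false => q

def symL : Bool → Letter
  | true => Letter.t
  | false => Letter.T

theorem bnd_pos (hp : 1 ≤ p) (hpq : p < q) (s : Bool) : 0 < bnd p q s := by
  cases s <;> simp [bnd] <;> omega

theorem psh_pos (hp : 1 ≤ p) (hpq : p < q) (s : Bool) : 0 < psh p q s := by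
  cases s <;> simp [psh] <;> omega

theorem bnd_not (s : Bool) : bnd p q (!s) = psh p q s := by cases s <;> rfl

theorem psh_not (s : Bool) : psh p q (!s) = bnd p q s := by cases s <;> rfl

theorem mem_rule_pow (s : Bool) :
    (replicate (bnd p q s).toNat a ++ [symL s], symL s :: replicate (psh p q s).toNat a)
      ∈ bsRules p q := by
  cases s <;> simp [bsRules, bnd, psh, symL]

theorem mem_rule_inv (s : Bool) :
    ([A, symL s], replicate (bnd p q s - 1).toNat a ++ [symL s]
      ++ replicate (psh p q s).toNat A) ∈ bsRules p q := by
  cases s <;> simp [bsRules, bnd, psh, symL]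

theorem mem_rule_cancel (s : Bool) :
    ([symL s, symL (!s)], ([] : List Letter)) ∈ bsRules p q := by
  cases s <;> simp [bsRules, symL]

theorem rtg_pow_sym_pos (hp : 1 ≤ p) (hpq : p < q) (s : Bool) :
    ∀ (m : ℕ) (ρ z w : ℤ), 0 ≤ ρ → z = bnd p q s * m + ρ → w = psh p q s * m →
      Rtg p q (aPow z ++ [symL s]) (aPow ρ ++ [symL s] ++ aPow w)
  | 0, ρ, z, w, hρ, hz, hw => by
    have e1 : bnd p q s * ((0:ℕ):ℤ) = 0 := by simp
    have e2 : psh p q s * ((0:ℕ):ℤ) = 0 := by simp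
    rw [show z = ρ by omega, show w = 0 by omega, aPow_zero, List.append_nil]
  | m + 1, ρ, z, w, hρ, hz, hw => by
    have hb := bnd_pos hp hpq s
    have hc := psh_pos hp hpq s
    have hbm : 0 ≤ bnd p q s * ((m:ℕ):ℤ) := by positivity
    have hcm : 0 ≤ psh p q s * ((m:ℕ):ℤ) := by positivity
    have eb : bnd p q s * (((m+1:ℕ)):ℤ) = bnd p q s * ((m:ℕ):ℤ) + bnd p q s := by
      push_cast; ring
    have ec : psh p q s * (((m+1:ℕ)):ℤ) = psh p q s * ((m:ℕ):ℤ) + psh p q s := by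
      push_cast; ring
    set z' := bnd p q s * ((m:ℕ):ℤ) + ρ with hz'
    set w' := psh p q s * ((m:ℕ):ℤ) with hw'
    have h1 : aPow z ++ [symL s]
        = aPow z' ++ (replicate (bnd p q s).toNat a ++ [symL s]) ++ [] := by
      rw [aPow_of_nonneg (n := z) (by omega), aPow_of_nonneg (n := z') (by positivity),
        show z.toNat = z'.toNat + (bnd p q s).toNat by omega, List.replicate_add]
      rw [List.append_assoc, List.append_nil]
    have hstep : Step p q
        (aPow z' ++ (replicate (bnd p q s).toNat a ++ [symL s]) ++ [])
        (aPow z' ++ (symL s :: replicate (psh p q s).toNat a) ++ []) :=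
      step_of_rule (mem_rule_pow s) _ _
    rw [h1]
    refine Relation.ReflTransGen.head hstep ?_
    have h2 : aPow z' ++ (symL s :: replicate (psh p q s).toNat a) ++ []
        = (aPow z' ++ [symL s]) ++ replicate (psh p q s).toNat a := by simp
    rw [h2]
    refine ((rtg_pow_sym_pos hp hpq s m ρ z' w' hρ rfl rfl).append_right _).trans ?_
    have h4 : aPow ρ ++ [symL s] ++ aPow w' ++ replicate (psh p q s).toNat a
        = aPow ρ ++ [symL s] ++ aPow w := by
      rw [aPow_of_nonneg (n := w') (by positivity), aPow_of_nonneg (n := w) (by omega),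
        show w.toNat = w'.toNat + (psh p q s).toNat by omega, List.replicate_add]
      simp
    rw [h4]

theorem rtg_pow_sym_neg (hp : 1 ≤ p) (hpq : p < q) (s : Bool) :
    ∀ (m : ℕ) (ρ z w : ℤ), 0 ≤ ρ → ρ < bnd p q s → z = ρ - bnd p q s * m →
      w = -(psh p q s * m) →
      Rtg p q (aPow z ++ [symL s]) (aPow ρ ++ [symL s] ++ aPow w)
  | 0, ρ, z, w, hρ, hρb, hz, hw => by
    have e1 : bnd p q s * ((0:ℕ):ℤ) = 0 := by simp
    have e2 : psh p q s * ((0:ℕ):ℤ) = 0 := by simp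
    rw [show z = ρ by omega, show w = 0 by omega, aPow_zero, List.append_nil]
  | m + 1, ρ, z, w, hρ, hρb, hz, hw => by
    have hb := bnd_pos hp hpq s
    have hc := psh_pos hp hpq s
    have hbm : 0 ≤ bnd p q s * ((m:ℕ):ℤ) := by positivity
    have hcm : 0 ≤ psh p q s * ((m:ℕ):ℤ) := by positivity
    have eb : bnd p q s * (((m+1:ℕ)):ℤ) = bnd p q s * ((m:ℕ):ℤ) + bnd p q s := by
      push_cast; ring
    have ec : psh p q s * (((m+1:ℕ)):ℤ) = psh p q s * ((m:ℕ):ℤ) + psh p q s := by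
      push_cast; ring
    set z' := ρ - bnd p q s * ((m:ℕ):ℤ) with hz'
    set w' := -(psh p q s * ((m:ℕ):ℤ)) with hw'
    have h1 : aPow z ++ [symL s]
        = replicate ((-z).toNat - 1) A ++ [A, symL s] ++ [] := by
      rw [aPow_of_nonpos (n := z) (by omega),
        show (-z).toNat = ((-z).toNat - 1) + 1 by omega, List.replicate_succ']
      simp
    have hstep : Step p q
        (replicate ((-z).toNat - 1) A ++ [A, symL s] ++ [])
        (replicate ((-z).toNat - 1) A
          ++ (replicate (bnd p q s - 1).toNat a ++ [symL s]
              ++ replicate (psh p q s).toNat A) ++ []) :=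
      step_of_rule (mem_rule_inv s) _ _
    rw [h1]
    refine Relation.ReflTransGen.head hstep ?_
    have h2 : replicate ((-z).toNat - 1) A
          ++ (replicate (bnd p q s - 1).toNat a ++ [symL s]
              ++ replicate (psh p q s).toNat A) ++ []
        = (replicate ((-z).toNat - 1) A ++ replicate (bnd p q s - 1).toNat a)
          ++ ([symL s] ++ replicate (psh p q s).toNat A) := by simp
    rw [h2]
    have h3 : Rtg p q (replicate ((-z).toNat - 1) A ++ replicate (bnd p q s - 1).toNat a)
        (aPow z') :=
      rtg_cancel_Aa _ _ _ (by omega)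
    refine (h3.append_right _).trans ?_
    have h4 : aPow z' ++ ([symL s] ++ replicate (psh p q s).toNat A)
        = (aPow z' ++ [symL s]) ++ replicate (psh p q s).toNat A := by simp
    rw [h4]
    refine ((rtg_pow_sym_neg hp hpq s m ρ z' w' hρ hρb rfl rfl).append_right _).trans ?_
    have h6 : aPow ρ ++ [symL s] ++ aPow w' ++ replicate (psh p q s).toNat A
        = aPow ρ ++ [symL s] ++ aPow w := by
      rw [aPow_of_nonpos (n := w') (by omega), aPow_of_nonpos (n := w) (by omega),
        show (-w).toNat = (-w').toNat + (psh p q s).toNat by omega, List.replicate_add]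
      simp
    rw [h6]

theorem rtg_aPow_sym (hp : 1 ≤ p) (hpq : p < q) (s : Bool) (e : ℤ) :
    Rtg p q (aPow e ++ [symL s])
      (aPow (e % bnd p q s) ++ [symL s] ++ aPow (psh p q s * (e / bnd p q s))) := by
  have hb := bnd_pos hp hpq s
  have hmod := Int.emod_nonneg e hb.ne'
  have hmodlt := Int.emod_lt_of_pos hb (a := e)
  have hdm := Int.mul_ediv_add_emod e (bnd p q s)
  rcases le_or_gt 0 (e / bnd p q s) with hμ | hμ
  · have hcast : ((e / bnd p q s).toNat : ℤ) = e / bnd p q s := Int.toNat_of_nonneg hμ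
    have hmul : bnd p q s * (((e / bnd p q s).toNat : ℕ) : ℤ) = bnd p q s * (e / bnd p q s) := by
      rw [hcast]
    have hmul2 : psh p q s * (((e / bnd p q s).toNat : ℕ) : ℤ) = psh p q s * (e / bnd p q s) := by
      rw [hcast]
    exact rtg_pow_sym_pos hp hpq s (e / bnd p q s).toNat (e % bnd p q s) e
      (psh p q s * (e / bnd p q s)) hmod (by omega) (by omega)
  · have hcast : (((-(e / bnd p q s)).toNat : ℕ) : ℤ) = -(e / bnd p q s) :=
      Int.toNat_of_nonneg (by omega)
    have hmul : bnd p q s * (((-(e / bnd p q s)).toNat : ℕ) : ℤ)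
        = -(bnd p q s * (e / bnd p q s)) := by rw [hcast]; ring
    have hmul2 : psh p q s * (((-(e / bnd p q s)).toNat : ℕ) : ℤ)
        = -(psh p q s * (e / bnd p q s)) := by rw [hcast]; ring
    exact rtg_pow_sym_neg hp hpq s (-(e / bnd p q s)).toNat (e % bnd p q s) e
      (psh p q s * (e / bnd p q s)) hmod hmodlt (by omega) (by omega)

/-! ### The normal form machine -/

abbrev NFS := List (ℤ × Bool) × ℤ

/-- Append the symbol `symL s` at the right of the (normalized) state. -/
def appS (p q : ℤ) (s : Bool) (st : NFS) : NFS :=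
  match st with
  | ([], e) => ([(e % bnd p q s, s)], psh p q s * (e / bnd p q s))
  | ((k, s') :: rest, e) =>
    if e % bnd p q s = 0 ∧ s' = !s then (rest, k + psh p q s * (e / bnd p q s))
    else ((e % bnd p q s, s) :: (k, s') :: rest, psh p q s * (e / bnd p q s))

/-- Append a letter at the right of the state. -/
def appL (p q : ℤ) (st : NFS) : Letter → NFS
  | .a => (st.1, st.2 + 1)
  | .A => (st.1, st.2 - 1)
  | .t => appS p q true st
  | .T => appS p q false st

def nfSt (p q : ℤ) (w : List Letter) : NFS := w.foldl (appL p q) ([], 0)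

def render : List (ℤ × Bool) → List Letter
  | [] => []
  | (k, s) :: rest => render rest ++ aPow k ++ [symL s]

def toWord (st : NFS) : List Letter := render st.1 ++ aPow st.2

def nfw (p q : ℤ) (w : List Letter) : List Letter := toWord (nfSt p q w)

def ValidS (p q : ℤ) (st : NFS) : Prop :=
  (∀ x ∈ st.1, 0 ≤ x.1 ∧ x.1 < bnd p q x.2) ∧
  st.1.Chain' (fun x y => x.1 = 0 → y.2 ≠ !x.2)

theorem validS_nil : ValidS p q ([], 0) := by
  constructor
  · intro x hx; simp at hx
  · exact List.isChain_nil

theorem validS_appS (hp : 1 ≤ p) (hpq : p < q) (s : Bool) (st : NFS)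
    (hst : ValidS p q st) : ValidS p q (appS p q s st) := by
  obtain ⟨bs, e⟩ := st
  have hb := bnd_pos hp hpq s
  have hmod := Int.emod_nonneg e hb.ne'
  have hmodlt := Int.emod_lt_of_pos hb (a := e)
  match bs with
  | [] =>
    refine ⟨?_, ?_⟩
    · intro x hx
      simp [appS] at hx
      subst hx
      exact ⟨hmod, hmodlt⟩
    · simp [appS]; exact List.isChain_singleton _
  | (k, s') :: rest =>
    obtain ⟨hmem, hch⟩ := hst
    by_cases hcond : e % bnd p q s = 0 ∧ s' = !s
    · have : appS p q s ((k, s') :: rest, e) = (rest, k + psh p q s * (e / bnd p q s)) := by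
        simp [appS, hcond.1, hcond.2]
      rw [this]
      exact ⟨fun x hx => hmem x (List.mem_cons_of_mem _ hx), hch.tail⟩
    · have : appS p q s ((k, s') :: rest, e)
          = ((e % bnd p q s, s) :: (k, s') :: rest, psh p q s * (e / bnd p q s)) := by
        simp only [appS]
        rw [if_neg hcond]
      rw [this]
      refine ⟨?_, ?_⟩
      · intro x hx
        rcases List.mem_cons.mp hx with h | h
        · subst h; exact ⟨hmod, hmodlt⟩
        · exact hmem x h
      · refine List.isChain_cons_cons.mpr ?_
        exact ⟨fun h1 h2 => hcond ⟨h1, h2.symm ▸ rfl⟩, hch⟩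

theorem validS_appL (hp : 1 ≤ p) (hpq : p < q) (st : NFS) (hst : ValidS p q st)
    (c : Letter) : ValidS p q (appL p q st c) := by
  cases c
  · exact hst
  · exact hst
  · exact validS_appS hp hpq true st hst
  · exact validS_appS hp hpq false st hst

theorem validS_foldl (hp : 1 ≤ p) (hpq : p < q) :
    ∀ (w : List Letter) (st : NFS), ValidS p q st → ValidS p q (w.foldl (appL p q) st)
  | [], st, hst => hst
  | c :: w, st, hst =>
    validS_foldl hp hpq w (appL p q st c) (validS_appL hp hpq st hst c)

theorem validS_nfSt (hp : 1 ≤ p) (hpq : p < q) (w : List Letter) :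
    ValidS p q (nfSt p q w) :=
  validS_foldl hp hpq w ([], 0) validS_nil

theorem appL_symL (s : Bool) (st : NFS) : appL p q st (symL s) = appS p q s st := by
  cases s <;> rfl

theorem appS_shift (hp : 1 ≤ p) (hpq : p < q) (s : Bool) (bs : List (ℤ × Bool)) (e : ℤ) :
    appS p q s (bs, e + bnd p q s)
      = ((appS p q s (bs, e)).1, (appS p q s (bs, e)).2 + psh p q s) := by
  have hb := bnd_pos hp hpq s
  have h1 : (e + bnd p q s) % bnd p q s = e % bnd p q s := by
    rw [show e + bnd p q s = e + bnd p q s * 1 by ring, Int.add_mul_emod_self_left]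
  have h2 : (e + bnd p q s) / bnd p q s = e / bnd p q s + 1 := by
    rw [show e + bnd p q s = e + 1 * bnd p q s by ring, Int.add_mul_ediv_right _ _ hb.ne']
  match bs with
  | [] =>
    simp only [appS, h1, h2]
    exact Prod.ext rfl (by ring)
  | (k, s') :: rest =>
    simp only [appS, h1, h2]
    by_cases hcond : e % bnd p q s = 0 ∧ s' = !s
    · rw [if_pos hcond, if_pos hcond]
      exact Prod.ext rfl (by ring)
    · rw [if_neg hcond, if_neg hcond]
      exact Prod.ext rfl (by ring)

theorem foldl_rep_a : ∀ (n : ℕ) (st : NFS),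
    List.foldl (appL p q) st (replicate n a) = (st.1, st.2 + n)
  | 0, st => by simp
  | n + 1, st => by
    rw [List.replicate_succ, List.foldl_cons, foldl_rep_a n]
    show ((st.1, st.2 + 1).1, (st.1, st.2 + 1).2 + (n : ℤ)) = _
    refine Prod.ext rfl ?_
    push_cast
    ring

theorem foldl_rep_A : ∀ (n : ℕ) (st : NFS),
    List.foldl (appL p q) st (replicate n A) = (st.1, st.2 - n)
  | 0, st => by simp
  | n + 1, st => by
    rw [List.replicate_succ, List.foldl_cons, foldl_rep_A n]
    show ((st.1, st.2 - 1).1, (st.1, st.2 - 1).2 - (n : ℤ)) = _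
    refine Prod.ext rfl ?_
    push_cast
    ring

theorem eqn_cancel_sym (hp : 1 ≤ p) (hpq : p < q) (s : Bool) (st : NFS)
    (hst : ValidS p q st) : appS p q (!s) (appS p q s st) = st := by
  obtain ⟨bs, e⟩ := st
  have hb := bnd_pos hp hpq s
  have hc := psh_pos hp hpq s
  have hbn : bnd p q (!s) = psh p q s := bnd_not s
  have hpn : psh p q (!s) = bnd p q s := psh_not s
  have hdm := Int.emod_add_mul_ediv e (bnd p q s)
  match bs with
  | [] =>
    have h1 : appS p q s (([] : List (ℤ × Bool)), e)
        = ([(e % bnd p q s, s)], psh p q s * (e / bnd p q s)) := rfl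
    rw [h1]
    have hm0 : (psh p q s * (e / bnd p q s)) % bnd p q (!s) = 0 := by
      rw [hbn]; exact Int.mul_emod_right _ _
    have hd0 : (psh p q s * (e / bnd p q s)) / bnd p q (!s) = e / bnd p q s := by
      rw [hbn]; exact Int.mul_ediv_cancel_left _ hc.ne'
    have h2 : appS p q (!s) (([(e % bnd p q s, s)]), psh p q s * (e / bnd p q s))
        = ([], e % bnd p q s + psh p q (!s) * (psh p q s * (e / bnd p q s) / bnd p q (!s))) := by
      simp only [appS]
      rw [if_pos ⟨hm0, (Bool.not_not s).symm⟩]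
    rw [h2, hd0, hpn]
    exact Prod.ext rfl (by omega)
  | (k, s') :: rest =>
    obtain ⟨hmem, hch⟩ := hst
    have hk := hmem (k, s') List.mem_cons_self
    by_cases hcond : e % bnd p q s = 0 ∧ s' = !s
    · have h1 : appS p q s ((k, s') :: rest, e)
          = (rest, k + psh p q s * (e / bnd p q s)) := by
        simp only [appS]; rw [if_pos hcond]
      rw [h1]
      have hkb : 0 ≤ k ∧ k < psh p q s := by
        have := hk.2
        rw [hcond.2, hbn] at this
        exact ⟨hk.1, this⟩
      have hm1 : (k + psh p q s * (e / bnd p q s)) % bnd p q (!s) = k := by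
        rw [hbn, Int.add_mul_emod_self_left, Int.emod_eq_of_lt hkb.1 hkb.2]
      have hd1 : (k + psh p q s * (e / bnd p q s)) / bnd p q (!s) = e / bnd p q s := by
        rw [hbn, Int.add_mul_ediv_left _ _ hc.ne', Int.ediv_eq_zero_of_lt hkb.1 hkb.2,
          zero_add]
      match rest with
      | [] =>
        have h2 : appS p q (!s) (([] : List (ℤ × Bool)), k + psh p q s * (e / bnd p q s))
            = ([(k, !s)], bnd p q s * (e / bnd p q s)) := by
          simp only [appS]
          rw [hm1, hd1, hpn]
        rw [h2]
        refine Prod.ext ?_ (by omega)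
        simp [← hcond.2]
      | (k2, s2) :: rest2 =>
        have hnc : ¬ (k = 0 ∧ s2 = !(!s)) := by
          rintro ⟨hk0, hs2⟩
          have hrel := (List.isChain_cons_cons.mp hch).1
          exact (hrel hk0) (by rw [hs2, hcond.2])
        have h2 : appS p q (!s) ((k2, s2) :: rest2, k + psh p q s * (e / bnd p q s))
            = ((k, !s) :: (k2, s2) :: rest2, psh p q (!s) * (e / bnd p q s)) := by
          simp only [appS]
          rw [hm1, hd1]
          rw [if_neg (by rintro ⟨h1', h2'⟩; exact hnc ⟨h1', h2'⟩)]
        rw [h2, hpn]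
        refine Prod.ext ?_ (by omega)
        simp [← hcond.2]
    · have h1 : appS p q s ((k, s') :: rest, e)
          = ((e % bnd p q s, s) :: (k, s') :: rest, psh p q s * (e / bnd p q s)) := by
        simp only [appS]; rw [if_neg hcond]
      rw [h1]
      have hm0 : (psh p q s * (e / bnd p q s)) % bnd p q (!s) = 0 := by
        rw [hbn]; exact Int.mul_emod_right _ _
      have hd0 : (psh p q s * (e / bnd p q s)) / bnd p q (!s) = e / bnd p q s := by
        rw [hbn]; exact Int.mul_ediv_cancel_left _ hc.ne'
      have h2 : appS p q (!s) ((e % bnd p q s, s) :: (k, s') :: rest,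
            psh p q s * (e / bnd p q s))
          = ((k, s') :: rest, e % bnd p q s
              + psh p q (!s) * (psh p q s * (e / bnd p q s) / bnd p q (!s))) := by
        simp only [appS]
        rw [if_pos ⟨hm0, (Bool.not_not s).symm⟩]
      rw [h2, hd0, hpn]
      exact Prod.ext rfl (by omega)

theorem eqn_pow (hp : 1 ≤ p) (hpq : p < q) (s : Bool) (st : NFS) :
    List.foldl (appL p q) st (replicate (bnd p q s).toNat a ++ [symL s])
      = List.foldl (appL p q) st (symL s :: replicate (psh p q s).toNat a) := by
  have hb := bnd_pos hp hpq s
  have hc := psh_pos hp hpq s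
  rw [List.foldl_append, foldl_rep_a, List.foldl_cons]
  simp only [List.foldl_cons, List.foldl_nil, appL_symL]
  rw [foldl_rep_a, Int.toNat_of_nonneg hb.le, Int.toNat_of_nonneg hc.le]
  obtain ⟨bs, e⟩ := st
  rw [appS_shift hp hpq]

theorem eqn_inv (hp : 1 ≤ p) (hpq : p < q) (s : Bool) (st : NFS) :
    List.foldl (appL p q) st [A, symL s]
      = List.foldl (appL p q) st (replicate (bnd p q s - 1).toNat a ++ [symL s]
          ++ replicate (psh p q s).toNat A) := by
  have hb := bnd_pos hp hpq s
  have hc := psh_pos hp hpq s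
  rw [List.foldl_append, List.foldl_append, foldl_rep_a]
  simp only [List.foldl_cons, List.foldl_nil, appL_symL]
  rw [foldl_rep_A, Int.toNat_of_nonneg (by omega : (0:ℤ) ≤ bnd p q s - 1),
    Int.toNat_of_nonneg hc.le]
  obtain ⟨bs, e⟩ := st
  show appS p q s (bs, e - 1) = _
  have he : e + (bnd p q s - 1) = (e - 1) + bnd p q s := by ring
  rw [he, appS_shift hp hpq]
  exact Prod.ext rfl (by ring)

theorem foldl_rule (hp : 1 ≤ p) (hpq : p < q) {l r : List Letter}
    (h : (l, r) ∈ bsRules p q) (st : NFS) (hst : ValidS p q st) :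
    List.foldl (appL p q) st l = List.foldl (appL p q) st r := by
  obtain ⟨bs, e⟩ := st
  simp only [bsRules, List.mem_cons, List.mem_singleton, Prod.mk.injEq] at h
  rcases h with ⟨rfl, rfl⟩ | ⟨rfl, rfl⟩ | ⟨rfl, rfl⟩ | ⟨rfl, rfl⟩ | ⟨rfl, rfl⟩
    | ⟨rfl, rfl⟩ | ⟨rfl, rfl⟩ | ⟨rfl, rfl⟩ | h
  · show ((bs, e + 1).1, (bs, e + 1).2 - 1) = (bs, e)
    exact Prod.ext rfl (by ring)
  · show ((bs, e - 1).1, (bs, e - 1).2 + 1) = (bs, e)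
    exact Prod.ext rfl (by ring)
  · exact eqn_cancel_sym hp hpq true (bs, e) hst
  · exact eqn_cancel_sym hp hpq false (bs, e) hst
  · exact eqn_pow hp hpq true (bs, e)
  · exact eqn_inv hp hpq true (bs, e)
  · exact eqn_pow hp hpq false (bs, e)
  · exact eqn_inv hp hpq false (bs, e)
  · exact absurd h List.not_mem_nil

theorem nfSt_eq_of_step (hp : 1 ≤ p) (hpq : p < q) {u v : List Letter}
    (h : Step p q u v) : nfSt p q u = nfSt p q v := by
  obtain ⟨x, y, l, r, hm, rfl, rfl⟩ := h
  simp only [nfSt, List.foldl_append]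
  rw [foldl_rule hp hpq hm _ (validS_foldl hp hpq x ([], 0) validS_nil)]

theorem nfSt_eq_of_rtg (hp : 1 ≤ p) (hpq : p < q) {u v : List Letter}
    (h : Rtg p q u v) : nfSt p q u = nfSt p q v := by
  induction h with
  | refl => rfl
  | tail _ h2 ih => exact ih.trans (nfSt_eq_of_step hp hpq h2)

theorem nfw_eq_of_rtg (hp : 1 ≤ p) (hpq : p < q) {u v : List Letter}
    (h : Rtg p q u v) : nfw p q u = nfw p q v := by
  rw [nfw, nfw, nfSt_eq_of_rtg hp hpq h]

/-! ### Every word rewrites to its normal form -/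

theorem rtg_toWord_appS (hp : 1 ≤ p) (hpq : p < q) (s : Bool) (bs : List (ℤ × Bool)) (e : ℤ) :
    Rtg p q (toWord (bs, e) ++ [symL s]) (toWord (appS p q s (bs, e))) := by
  have hb := bnd_pos hp hpq s
  have hc := psh_pos hp hpq s
  have hbase : Rtg p q (render bs ++ (aPow e ++ [symL s]))
      (render bs ++ (aPow (e % bnd p q s) ++ [symL s]
        ++ aPow (psh p q s * (e / bnd p q s)))) :=
    (rtg_aPow_sym hp hpq s e).append_left (render bs)
  have hstart : toWord (bs, e) ++ [symL s] = render bs ++ (aPow e ++ [symL s]) := by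
    simp [toWord]
  match bs with
  | [] =>
    have hend : toWord (appS p q s (([] : List (ℤ × Bool)), e))
        = render [] ++ (aPow (e % bnd p q s) ++ [symL s]
            ++ aPow (psh p q s * (e / bnd p q s))) := by
      simp [appS, toWord, render]
    rw [hstart, hend]
    exact hbase
  | (k, s') :: rest =>
    by_cases hcond : e % bnd p q s = 0 ∧ s' = !s
    · have happ : appS p q s ((k, s') :: rest, e)
          = (rest, k + psh p q s * (e / bnd p q s)) := by
        simp only [appS]; rw [if_pos hcond]
      have hmid : render ((k, s') :: rest) ++ (aPow (e % bnd p q s) ++ [symL s]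
            ++ aPow (psh p q s * (e / bnd p q s)))
          = (render rest ++ aPow k) ++ ([symL (!s), symL s]
            ++ aPow (psh p q s * (e / bnd p q s))) := by
        rw [hcond.1, aPow_zero, hcond.2]
        simp [render]
      have hmem := mem_rule_cancel (p := p) (q := q) (!s)
      rw [Bool.not_not] at hmem
      have hstep : Step p q
          ((render rest ++ aPow k) ++ [symL (!s), symL s]
            ++ aPow (psh p q s * (e / bnd p q s)))
          ((render rest ++ aPow k) ++ []
            ++ aPow (psh p q s * (e / bnd p q s))) :=
        step_of_rule hmem _ _
      rw [hstart, happ]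
      refine hbase.trans ?_
      rw [hmid]
      rw [show (render rest ++ aPow k) ++ ([symL (!s), symL s]
            ++ aPow (psh p q s * (e / bnd p q s)))
          = (render rest ++ aPow k) ++ [symL (!s), symL s]
            ++ aPow (psh p q s * (e / bnd p q s)) by simp]
      refine Relation.ReflTransGen.head hstep ?_
      rw [show (render rest ++ aPow k) ++ [] ++ aPow (psh p q s * (e / bnd p q s))
          = render rest ++ (aPow k ++ aPow (psh p q s * (e / bnd p q s))) by simp]
      have hmerge := (rtg_aPow_merge (p := p) (q := q) k
        (psh p q s * (e / bnd p q s))).append_left (render rest)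
      refine hmerge.trans ?_
      simp only [toWord, happ]
      exact Relation.ReflTransGen.refl
    · have happ : appS p q s ((k, s') :: rest, e)
          = ((e % bnd p q s, s) :: (k, s') :: rest, psh p q s * (e / bnd p q s)) := by
        simp only [appS]; rw [if_neg hcond]
      rw [hstart, happ]
      refine hbase.trans ?_
      simp only [toWord, render]
      rw [show render rest ++ aPow k ++ [symL s'] ++ aPow (e % bnd p q s)
            ++ [symL s] ++ aPow (psh p q s * (e / bnd p q s))
          = render rest ++ aPow k ++ [symL s'] ++ (aPow (e % bnd p q s)
            ++ [symL s] ++ aPow (psh p q s * (e / bnd p q s))) by simp]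

theorem rtg_toWord_appL (hp : 1 ≤ p) (hpq : p < q) (st : NFS) (c : Letter) :
    Rtg p q (toWord st ++ [c]) (toWord (appL p q st c)) := by
  obtain ⟨bs, e⟩ := st
  cases c
  · rw [show toWord (bs, e) ++ [a] = render bs ++ (aPow e ++ aPow 1) by simp [toWord, aPow_one]]
    have := (rtg_aPow_merge (p := p) (q := q) e 1).append_left (render bs)
    refine this.trans ?_
    simp only [toWord, appL]
    exact Relation.ReflTransGen.refl
  · rw [show toWord (bs, e) ++ [A] = render bs ++ (aPow e ++ aPow (-1)) by
      simp [toWord, aPow_neg_one]]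
    have := (rtg_aPow_merge (p := p) (q := q) e (-1)).append_left (render bs)
    refine this.trans ?_
    rw [show e + (-1) = e - 1 by ring]
    simp only [toWord, appL]
    exact Relation.ReflTransGen.refl
  · exact rtg_toWord_appS hp hpq true bs e
  · exact rtg_toWord_appS hp hpq false bs e

theorem nfw_nil : nfw p q [] = [] := by
  simp [nfw, nfSt, toWord, render, aPow_zero]

theorem rtg_nfw (hp : 1 ≤ p) (hpq : p < q) (w : List Letter) : Rtg p q w (nfw p q w) := by
  induction w using List.reverseRecOn with
  | nil => rw [nfw_nil]
  | append_singleton w c ih =>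
    have h1 : Rtg p q (w ++ [c]) (nfw p q w ++ [c]) := ih.append_right [c]
    have h2 : Rtg p q (nfw p q w ++ [c]) (toWord (appL p q (nfSt p q w) c)) :=
      rtg_toWord_appL hp hpq _ c
    have h3 : nfSt p q (w ++ [c]) = appL p q (nfSt p q w) c := by
      simp [nfSt, List.foldl_append]
    rw [nfw, h3]
    exact h1.trans h2

theorem nfw_idem (hp : 1 ≤ p) (hpq : p < q) (w : List Letter) :
    nfw p q (nfw p q w) = nfw p q w :=
  (nfw_eq_of_rtg hp hpq (rtg_nfw hp hpq w)).symm

theorem nfw_append_right (hp : 1 ≤ p) (hpq : p < q) (x y : List Letter) :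
    nfw p q (x ++ nfw p q y) = nfw p q (x ++ y) :=
  (nfw_eq_of_rtg hp hpq ((rtg_nfw hp hpq y).append_left x)).symm

theorem nfw_append_left (hp : 1 ≤ p) (hpq : p < q) (x y : List Letter) :
    nfw p q (nfw p q x ++ y) = nfw p q (x ++ y) :=
  (nfw_eq_of_rtg hp hpq ((rtg_nfw hp hpq x).append_right y)).symm

/-! ### Formal inverses -/

def flipL : Letter → Letter
  | .a => A
  | .A => a
  | .t => T
  | .T => t

def invW (w : List Letter) : List Letter := (w.reverse).map flipL

theorem invW_nil : invW [] = [] := rfl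

theorem invW_cons (c : Letter) (w : List Letter) : invW (c :: w) = invW w ++ [flipL c] := by
  simp [invW]

theorem mem_rule_flip (c : Letter) : ([c, flipL c], ([] : List Letter)) ∈ bsRules p q := by
  cases c <;> simp [bsRules, flipL]

theorem mem_rule_flip' (c : Letter) : ([flipL c, c], ([] : List Letter)) ∈ bsRules p q := by
  cases c <;> simp [bsRules, flipL]

theorem rtg_mul_inv : ∀ w : List Letter, Rtg p q (w ++ invW w) []
  | [] => by rw [invW_nil]; exact Relation.ReflTransGen.refl
  | c :: w => by
    rw [invW_cons]
    have h1 : (c :: w) ++ (invW w ++ [flipL c]) = [c] ++ (w ++ invW w) ++ [flipL c] := by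
      simp
    rw [h1]
    have h2 := ((rtg_mul_inv w).append_left [c]).append_right [flipL c]
    refine h2.trans ?_
    have hstep : Step p q ([] ++ [c, flipL c] ++ []) ([] ++ [] ++ []) :=
      step_of_rule (mem_rule_flip c) _ _
    simp only [List.nil_append, List.append_nil] at hstep
    have h3 : [c] ++ [] ++ [flipL c] = [c, flipL c] := by simp
    rw [h3]
    exact Relation.ReflTransGen.single hstep

theorem rtg_inv_mul : ∀ w : List Letter, Rtg p q (invW w ++ w) []
  | [] => by rw [invW_nil]; exact Relation.ReflTransGen.refl
  | c :: w => by
    rw [invW_cons]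
    have h1 : (invW w ++ [flipL c]) ++ (c :: w) = invW w ++ [flipL c, c] ++ w := by
      simp
    rw [h1]
    have hstep : Step p q (invW w ++ [flipL c, c] ++ w) (invW w ++ [] ++ w) :=
      step_of_rule (mem_rule_flip' c) _ _
    refine Relation.ReflTransGen.head hstep ?_
    have h2 : invW w ++ [] ++ w = invW w ++ w := by simp
    rw [h2]
    exact rtg_inv_mul w

/-! ### The group of normal forms -/

def Gc (p q : ℤ) (_ : 1 ≤ p) (_ : p < q) : Type := {w : List Letter // nfw p q w = w}

instance instGroupGc (p q : ℤ) (hp : 1 ≤ p) (hpq : p < q) : Group (Gc p q hp hpq) where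
  mul u v := ⟨nfw p q (u.1 ++ v.1), nfw_idem hp hpq _⟩
  one := ⟨[], nfw_nil⟩
  inv u := ⟨nfw p q (invW u.1), nfw_idem hp hpq _⟩
  mul_assoc u v w := Subtype.ext (by
    show nfw p q (nfw p q (u.1 ++ v.1) ++ w.1) = nfw p q (u.1 ++ nfw p q (v.1 ++ w.1))
    rw [nfw_append_left hp hpq, nfw_append_right hp hpq, List.append_assoc])
  one_mul u := Subtype.ext (by
    show nfw p q ([] ++ u.1) = u.1
    rw [List.nil_append]; exact u.2)
  mul_one u := Subtype.ext (by
    show nfw p q (u.1 ++ []) = u.1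
    rw [List.append_nil]; exact u.2)
  inv_mul_cancel u := Subtype.ext (by
    show nfw p q (nfw p q (invW u.1) ++ u.1) = []
    rw [nfw_append_left hp hpq, nfw_eq_of_rtg hp hpq (rtg_inv_mul u.1), nfw_nil])

def evalG (p q : ℤ) (hp : 1 ≤ p) (hpq : p < q) (w : List Letter) : Gc p q hp hpq :=
  ⟨nfw p q w, nfw_idem hp hpq w⟩

theorem evalG_val (hp : 1 ≤ p) (hpq : p < q) (w : List Letter) :
    (evalG p q hp hpq w).1 = nfw p q w := rfl

theorem evalG_nil (hp : 1 ≤ p) (hpq : p < q) : evalG p q hp hpq [] = 1 :=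
  Subtype.ext nfw_nil

theorem evalG_append (hp : 1 ≤ p) (hpq : p < q) (x y : List Letter) :
    evalG p q hp hpq (x ++ y) = evalG p q hp hpq x * evalG p q hp hpq y :=
  Subtype.ext (by
    show nfw p q (x ++ y) = nfw p q (nfw p q x ++ nfw p q y)
    rw [nfw_append_left hp hpq, nfw_append_right hp hpq])

theorem evalG_eq_one_of_rtg_nil (hp : 1 ≤ p) (hpq : p < q) {w : List Letter}
    (h : Rtg p q w []) : evalG p q hp hpq w = 1 :=
  Subtype.ext (by show nfw p q w = []; rw [nfw_eq_of_rtg hp hpq h, nfw_nil])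

theorem evalG_inv (hp : 1 ≤ p) (hpq : p < q) (w : List Letter) :
    evalG p q hp hpq (invW w) = (evalG p q hp hpq w)⁻¹ :=
  eq_inv_of_mul_eq_one_right (by
    rw [← evalG_append hp hpq]
    exact evalG_eq_one_of_rtg_nil hp hpq (rtg_mul_inv w))

theorem evalG_replicate (hp : 1 ≤ p) (hpq : p < q) (c : Letter) :
    ∀ n : ℕ, evalG p q hp hpq (replicate n c) = (evalG p q hp hpq [c]) ^ n
  | 0 => by rw [pow_zero]; exact evalG_nil hp hpq
  | n + 1 => by
    rw [pow_succ', List.replicate_succ,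
      show (c :: replicate n c) = [c] ++ replicate n c from rfl,
      evalG_append hp hpq, evalG_replicate hp hpq c n]

theorem invW_replicate_a (n : ℕ) : invW (replicate n a) = replicate n A := by
  simp [invW, List.reverse_replicate, List.map_replicate, flipL]

/-! ### Evaluation in the Baumslag–Solitar group -/

theorem eval_nil : eval p q [] = 1 := rfl

theorem eval_cons (c : Letter) (w : List Letter) :
    eval p q (c :: w) = evalLetter p q c * eval p q w := by
  simp [eval]

theorem eval_append (u v : List Letter) :
    eval p q (u ++ v) = eval p q u * eval p q v := by
  simp [eval]

theorem eval_replicate (n : ℕ) (c : Letter) :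
    eval p q (replicate n c) = (evalLetter p q c) ^ n := by
  simp [eval, List.map_replicate, List.prod_replicate]

theorem key_rel (p q : ℤ) :
    (PresentedGroup.of true : BS p q) * (PresentedGroup.of false) ^ p
      * (PresentedGroup.of true)⁻¹ * (PresentedGroup.of false) ^ (-q) = 1 := by
  have hmem : FreeGroup.of true * (FreeGroup.of false) ^ p * (FreeGroup.of true)⁻¹
      * (FreeGroup.of false) ^ (-q) ∈ Subgroup.normalClosure (bsRel p q) :=
    Subgroup.subset_normalClosure rfl
  have h2 : PresentedGroup.mk (bsRel p q) (FreeGroup.of true * (FreeGroup.of false) ^ p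
      * (FreeGroup.of true)⁻¹ * (FreeGroup.of false) ^ (-q)) = 1 :=
    (QuotientGroup.eq_one_iff _).mpr hmem
  simpa [map_mul, map_zpow, map_inv, PresentedGroup.of] using h2

theorem eval_rule (hp : 1 ≤ p) (hpq : p < q) {l r : List Letter}
    (h : (l, r) ∈ bsRules p q) : eval p q l = eval p q r := by
  set τ := (PresentedGroup.of true : BS p q) with hτ
  set α := (PresentedGroup.of false : BS p q) with hα
  have h1 : τ * α ^ p * τ⁻¹ = α ^ q := by
    have hrel := key_rel p q
    rw [mul_eq_one_iff_eq_inv] at hrel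
    rw [hrel, ← zpow_neg, neg_neg]
  have k1 : α ^ q * τ = τ * α ^ p := by rw [← h1]; group
  have k2 : τ * α ^ (-p) = α ^ (-q) * τ := by
    calc τ * α ^ (-p) = α ^ (-q) * (α ^ q * τ) * α ^ (-p) := by group
    _ = α ^ (-q) * (τ * α ^ p) * α ^ (-p) := by rw [k1]
    _ = α ^ (-q) * τ := by group
  have k3 : α ^ p * τ⁻¹ = τ⁻¹ * α ^ q := by
    calc α ^ p * τ⁻¹ = τ⁻¹ * (τ * α ^ p * τ⁻¹) := by group
    _ = τ⁻¹ * α ^ q := by rw [h1]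
  have k4 : τ⁻¹ * α ^ (-q) = α ^ (-p) * τ⁻¹ := by
    calc τ⁻¹ * α ^ (-q) = α ^ (-p) * (α ^ p * τ⁻¹) * α ^ (-q) := by group
    _ = α ^ (-p) * (τ⁻¹ * α ^ q) * α ^ (-q) := by rw [k3]
    _ = α ^ (-p) * τ⁻¹ := by group
  have ca : evalLetter p q a = α := rfl
  have cA : evalLetter p q A = α⁻¹ := rfl
  have ct : evalLetter p q Letter.t = τ := rfl
  have cT : evalLetter p q Letter.T = τ⁻¹ := rfl
  have cq : ((q.toNat : ℕ) : ℤ) = q := Int.toNat_of_nonneg (by omega)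
  have cp : ((p.toNat : ℕ) : ℤ) = p := Int.toNat_of_nonneg (by omega)
  have cq1 : (((q - 1).toNat : ℕ) : ℤ) = q - 1 := Int.toNat_of_nonneg (by omega)
  have cp1 : (((p - 1).toNat : ℕ) : ℤ) = p - 1 := Int.toNat_of_nonneg (by omega)
  simp only [bsRules, List.mem_cons, List.mem_singleton, Prod.mk.injEq] at h
  rcases h with ⟨rfl, rfl⟩ | ⟨rfl, rfl⟩ | ⟨rfl, rfl⟩ | ⟨rfl, rfl⟩ | ⟨rfl, rfl⟩
    | ⟨rfl, rfl⟩ | ⟨rfl, rfl⟩ | ⟨rfl, rfl⟩ | h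
  · rw [eval_cons, eval_cons, eval_nil, ca, cA]; group
  · rw [eval_cons, eval_cons, eval_nil, cA, ca]; group
  · rw [eval_cons, eval_cons, eval_nil, ct, cT]; group
  · rw [eval_cons, eval_cons, eval_nil, cT, ct]; group
  · simp only [eval_append, eval_cons, eval_replicate, eval_nil, mul_one, ca, ct]
    rw [← zpow_natCast α q.toNat, ← zpow_natCast α p.toNat, cq, cp]
    exact k1
  · simp only [eval_append, eval_cons, eval_replicate, eval_nil, mul_one, ca, cA, ct]
    rw [inv_pow, ← zpow_natCast α (q-1).toNat, ← zpow_natCast α p.toNat, cq1, cp,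
      ← zpow_neg, mul_assoc, k2, ← mul_assoc, ← zpow_add,
      show q - 1 + -q = -1 by ring, zpow_neg_one]
  · simp only [eval_append, eval_cons, eval_replicate, eval_nil, mul_one, ca, cT]
    rw [← zpow_natCast α p.toNat, ← zpow_natCast α q.toNat, cp, cq]
    exact k3
  · simp only [eval_append, eval_cons, eval_replicate, eval_nil, mul_one, ca, cA, cT]
    rw [inv_pow, ← zpow_natCast α (p-1).toNat, ← zpow_natCast α q.toNat, cp1, cq,
      ← zpow_neg, mul_assoc, k4, ← mul_assoc, ← zpow_add,
      show p - 1 + -p = -1 by ring, zpow_neg_one]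
  · exact absurd h List.not_mem_nil

theorem eval_step (hp : 1 ≤ p) (hpq : p < q) {u v : List Letter}
    (h : Step p q u v) : eval p q u = eval p q v := by
  obtain ⟨x, y, l, r, hm, rfl, rfl⟩ := h
  rw [eval_append, eval_append, eval_append, eval_append, eval_rule hp hpq hm]

theorem eval_rtg (hp : 1 ≤ p) (hpq : p < q) {u v : List Letter}
    (h : Rtg p q u v) : eval p q u = eval p q v := by
  induction h with
  | refl => rfl
  | tail _ h2 ih => exact ih.trans (eval_step hp hpq h2)

/-! ### The homomorphism from the presented group to normal forms -/

def fG (p q : ℤ) (hp : 1 ≤ p) (hpq : p < q) : Bool → Gc p q hp hpq := fun b =>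
  if b then evalG p q hp hpq [Letter.t] else evalG p q hp hpq [a]

theorem hrelG (p q : ℤ) (hp : 1 ≤ p) (hpq : p < q) :
    ∀ r ∈ bsRel p q, FreeGroup.lift (fG p q hp hpq) r = 1 := by
  intro r hr
  rcases hr with rfl
  have hft : fG p q hp hpq true = evalG p q hp hpq [Letter.t] := rfl
  have hff : fG p q hp hpq false = evalG p q hp hpq [a] := rfl
  simp only [map_mul, map_zpow, map_inv, FreeGroup.lift_apply_of, hft, hff]
  have cq : ((q.toNat : ℕ) : ℤ) = q := Int.toNat_of_nonneg (by omega)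
  have cp : ((p.toNat : ℕ) : ℤ) = p := Int.toNat_of_nonneg (by omega)
  have hinvt : (evalG p q hp hpq [Letter.t])⁻¹ = evalG p q hp hpq [Letter.T] := by
    rw [← evalG_inv hp hpq]; rfl
  have hpw : (evalG p q hp hpq [a]) ^ (p : ℤ) = evalG p q hp hpq (replicate p.toNat a) := by
    rw [show (evalG p q hp hpq [a]) ^ (p : ℤ)
        = (evalG p q hp hpq [a]) ^ ((p.toNat : ℕ) : ℤ) from
      congrArg (evalG p q hp hpq [a] ^ ·) cp.symm]
    rw [zpow_natCast, ← evalG_replicate hp hpq]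
  have hqw : (evalG p q hp hpq [a]) ^ (-q : ℤ)
      = evalG p q hp hpq (replicate q.toNat A) := by
    rw [show (evalG p q hp hpq [a]) ^ (-q : ℤ)
        = (evalG p q hp hpq [a]) ^ (-((q.toNat : ℕ) : ℤ)) from
      congrArg (evalG p q hp hpq [a] ^ ·) (by omega)]
    rw [zpow_neg, zpow_natCast, ← evalG_replicate hp hpq, ← evalG_inv hp hpq,
      invW_replicate_a]
  rw [hpw, hqw, hinvt, ← evalG_append hp hpq, ← evalG_append hp hpq, ← evalG_append hp hpq]
  refine evalG_eq_one_of_rtg_nil hp hpq ?_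
  have hstep1 : Step p q ([Letter.t] ++ (replicate p.toNat a ++ [Letter.T])
        ++ replicate q.toNat A)
      ([Letter.t] ++ (Letter.T :: replicate q.toNat a) ++ replicate q.toNat A) :=
    step_of_rule (by simp [bsRules]) _ _
  have hshape : [Letter.t] ++ replicate p.toNat a ++ [Letter.T] ++ replicate q.toNat A
      = [Letter.t] ++ (replicate p.toNat a ++ [Letter.T]) ++ replicate q.toNat A := by simp
  rw [hshape]
  refine Relation.ReflTransGen.head hstep1 ?_
  have hstep2 : Step p q ([] ++ [Letter.t, Letter.T]
        ++ (replicate q.toNat a ++ replicate q.toNat A))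
      ([] ++ [] ++ (replicate q.toNat a ++ replicate q.toNat A)) :=
    step_of_rule (by simp [bsRules]) _ _
  have hshape2 : [Letter.t] ++ (Letter.T :: replicate q.toNat a) ++ replicate q.toNat A
      = [] ++ [Letter.t, Letter.T] ++ (replicate q.toNat a ++ replicate q.toNat A) := by simp
  rw [hshape2]
  refine Relation.ReflTransGen.head hstep2 ?_
  have hshape3 : ([] : List Letter) ++ [] ++ (replicate q.toNat a ++ replicate q.toNat A)
      = replicate q.toNat a ++ replicate q.toNat A := by simp
  rw [hshape3]
  exact rtg_cancel_aA q.toNat q.toNat 0 (by omega) |>.trans (by rw [aPow_zero])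

theorem Phi_eval (p q : ℤ) (hp : 1 ≤ p) (hpq : p < q) (w : List Letter) :
    PresentedGroup.toGroup (hrelG p q hp hpq) (eval p q w) = evalG p q hp hpq w := by
  induction w with
  | nil => rw [eval_nil, map_one, evalG_nil hp hpq]
  | cons c w ih =>
    rw [eval_cons, map_mul, ih]
    have hc : PresentedGroup.toGroup (hrelG p q hp hpq) (evalLetter p q c)
        = evalG p q hp hpq [c] := by
      cases c
      · exact PresentedGroup.toGroup.of (hrelG p q hp hpq)
      · rw [show evalLetter p q A = (PresentedGroup.of false)⁻¹ from rfl, map_inv,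
          PresentedGroup.toGroup.of (hrelG p q hp hpq),
          show fG p q hp hpq false = evalG p q hp hpq [a] from rfl,
          ← evalG_inv hp hpq]
        rfl
      · exact PresentedGroup.toGroup.of (hrelG p q hp hpq)
      · rw [show evalLetter p q Letter.T = (PresentedGroup.of true)⁻¹ from rfl, map_inv,
          PresentedGroup.toGroup.of (hrelG p q hp hpq),
          show fG p q hp hpq true = evalG p q hp hpq [Letter.t] from rfl,
          ← evalG_inv hp hpq]
        rfl
    rw [hc, ← evalG_append hp hpq]
    rfl

end BSAux

theorem bs_rewriting_confluent (p q : ℤ) (hp : 1 ≤ p) (hpq : p < q) :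
    (∀ w u v : List Letter, Relation.ReflTransGen (Step p q) w u →
      Relation.ReflTransGen (Step p q) w v →
      ∃ z, Relation.ReflTransGen (Step p q) u z ∧ Relation.ReflTransGen (Step p q) v z) ∧
    (∀ u v : List Letter, eval p q u = eval p q v ↔
      ∃ z, Relation.ReflTransGen (Step p q) u z ∧ Relation.ReflTransGen (Step p q) v z) := by
  constructor
  · intro w u v hu hv
    refine ⟨nfw p q u, rtg_nfw hp hpq u, ?_⟩
    have h : nfw p q u = nfw p q v :=
      (nfw_eq_of_rtg hp hpq hu).symm.trans (nfw_eq_of_rtg hp hpq hv)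
    rw [h]
    exact rtg_nfw hp hpq v
  · intro u v
    constructor
    · intro h
      have h2 := congrArg (PresentedGroup.toGroup (hrelG p q hp hpq)) h
      rw [Phi_eval p q hp hpq, Phi_eval p q hp hpq] at h2
      have h3 : nfw p q u = nfw p q v := congrArg Subtype.val h2
      refine ⟨nfw p q u, rtg_nfw hp hpq u, ?_⟩
      rw [h3]
      exact rtg_nfw hp hpq v
    · rintro ⟨z, hz1, hz2⟩
      rw [eval_rtg hp hpq hz1, eval_rtg hp hpq hz2]
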